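/- Fix m, n ∈ ℕ and 0 ≤ r ≤ min(m, n). The number of diagonally 2-colored Delannoy paths from (0,0) to (m,n) containing exactly r diagonal steps equals 2^r · C(m+n-r, m) · C(m, r), where C(·,·) denotes the binomial coefficient. Concretely: the number of finite lists of steps, each step being one of R (displacement (1,0)), U (displacement (0,1)), D₁ (displacement (1,1)), or D₂ (displacement (1,1)), whose displacements sum to (m,n) and which contain exactly r steps from {D₁, D₂}, equals 2^r · C(m+n-r, m) · C(m, r). -/

import Mathlib

/-- A step of a diagonally 2-colored Delannoy path: right, up, or a diagonal step in one
of two colors. -/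
inductive DStep : Type
  | R : DStep
  | U : DStep
  | D1 : DStep
  | D2 : DStep
deriving DecidableEq

/-- The displacement of a step. -/
def DStep.disp : DStep → ℕ × ℕ
  | .R => (1, 0)
  | .U => (0, 1)
  | .D1 => (1, 1)
  | .D2 => (1, 1)

/-- Whether a step is a (colored) diagonal step. -/
def DStep.isDiag : DStep → Bool
  | .D1 => true
  | .D2 => true
  | _ => false

instance : Fintype DStep :=
  ⟨{.R, .U, .D1, .D2}, by intro x; cases x <;> simp⟩

open DStep

/-- The set of paths. -/
def DS (m n r : ℕ) : Set (List DStep) :=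
  {l : List DStep | (l.map DStep.disp).sum = (m, n) ∧ l.countP DStep.isDiag = r}

lemma DS_sum_cons (s : DStep) (l : List DStep) :
    ((s :: l).map DStep.disp).sum = s.disp + (l.map DStep.disp).sum := by simp

lemma DS_length_le (l : List DStep) :
    l.length ≤ ((l.map DStep.disp).sum).1 + ((l.map DStep.disp).sum).2 := by
  induction l with
  | nil => simp
  | cons s t ih =>
    rw [DS_sum_cons]
    cases s <;> simp [DStep.disp, Prod.fst_add, Prod.snd_add] at * <;> omega

lemma DS_finite (m n r : ℕ) : (DS m n r).Finite := by
  apply Set.Finite.subset (List.finite_length_le DStep (m + n))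
  rintro l ⟨h1, -⟩
  have := DS_length_le l
  rw [h1] at this
  simpa using this

lemma DS_count_le (l : List DStep) :
    l.countP DStep.isDiag ≤ ((l.map DStep.disp).sum).1 ∧
    l.countP DStep.isDiag ≤ ((l.map DStep.disp).sum).2 := by
  induction l with
  | nil => simp
  | cons s t ih =>
    rw [DS_sum_cons]
    cases s <;> simp [DStep.disp, DStep.isDiag, Prod.fst_add, Prod.snd_add,
      List.countP_cons] at * <;> omega

lemma DS_empty (m n r : ℕ) (h : min m n < r) : DS m n r = ∅ := by
  ext l
  simp only [DS, Set.mem_setOf_eq, Set.mem_empty_iff_false, iff_false, not_and]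
  intro h1 h2
  have := DS_count_le l
  rw [h1, h2] at this
  simp at this
  omega

lemma DS_m_zero (n : ℕ) : ∀ l : List DStep, (l.map DStep.disp).sum = (0, n) →
    l = List.replicate n U := by
  induction n with
  | zero =>
    intro l h
    cases l with
    | nil => simp
    | cons s t =>
      rw [DS_sum_cons] at h
      cases s <;> simp [DStep.disp, Prod.ext_iff] at h
  | succ k ih =>
    intro l h
    cases l with
    | nil => simp [Prod.ext_iff] at h
    | cons s t =>
      rw [DS_sum_cons] at h
      cases s <;> simp [DStep.disp, Prod.ext_iff] at h
      simp only [List.replicate_succ, List.cons.injEq, true_and]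
      exact ih t (by rw [Prod.ext_iff]; simp; omega)

lemma DS_n_zero (m : ℕ) : ∀ l : List DStep, (l.map DStep.disp).sum = (m, 0) →
    l = List.replicate m R := by
  induction m with
  | zero =>
    intro l h
    cases l with
    | nil => simp
    | cons s t =>
      rw [DS_sum_cons] at h
      cases s <;> simp [DStep.disp, Prod.ext_iff] at h
  | succ k ih =>
    intro l h
    cases l with
    | nil => simp [Prod.ext_iff] at h
    | cons s t =>
      rw [DS_sum_cons] at h
      cases s <;> simp [DStep.disp, Prod.ext_iff] at h
      simp only [List.replicate_succ, List.cons.injEq, true_and]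
      exact ih t (by rw [Prod.ext_iff]; simp; omega)

lemma sum_replicate_U (n : ℕ) : ((List.replicate n U).map DStep.disp).sum = (0, n) := by
  induction n with
  | zero => simp; rfl
  | succ k ih =>
    simp [List.replicate_succ, DS_sum_cons, ih, DStep.disp, Prod.ext_iff]
    omega

lemma sum_replicate_R (m : ℕ) : ((List.replicate m R).map DStep.disp).sum = (m, 0) := by
  induction m with
  | zero => simp; rfl
  | succ k ih =>
    simp [List.replicate_succ, DS_sum_cons, ih, DStep.disp, Prod.ext_iff]
    omega

lemma DS_m_zero_set (n : ℕ) : DS 0 n 0 = {List.replicate n U} := by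
  ext l
  simp only [DS, Set.mem_setOf_eq, Set.mem_singleton_iff]
  constructor
  · rintro ⟨h1, -⟩; exact DS_m_zero n l h1
  · rintro rfl
    refine ⟨sum_replicate_U n, ?_⟩
    rw [List.countP_eq_zero]
    intro a ha
    simp [List.eq_of_mem_replicate ha, DStep.isDiag]

lemma DS_n_zero_set (m : ℕ) : DS m 0 0 = {List.replicate m R} := by
  ext l
  simp only [DS, Set.mem_setOf_eq, Set.mem_singleton_iff]
  constructor
  · rintro ⟨h1, -⟩; exact DS_n_zero m l h1
  · rintro rfl
    refine ⟨sum_replicate_R m, ?_⟩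
    rw [List.countP_eq_zero]
    intro a ha
    simp [List.eq_of_mem_replicate ha, DStep.isDiag]

/-- Decomposition for r = 0, m,n ≥ 1. -/
lemma DS_decomp_zero (m n : ℕ) :
    DS (m+1) (n+1) 0 =
      (List.cons R '' DS m (n+1) 0) ∪ (List.cons U '' DS (m+1) n 0) := by
  ext l
  simp only [DS, Set.mem_setOf_eq, Set.mem_union, Set.mem_image]
  constructor
  · rintro ⟨h1, h2⟩
    cases l with
    | nil => simp [Prod.ext_iff] at h1
    | cons s t =>
      rw [DS_sum_cons] at h1
      rw [List.countP_cons] at h2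
      cases s
      · left; exact ⟨t, ⟨by simp [DStep.disp, Prod.ext_iff] at h1 ⊢; omega,
          by simpa [DStep.isDiag] using h2⟩, rfl⟩
      · right; exact ⟨t, ⟨by simp [DStep.disp, Prod.ext_iff] at h1 ⊢; omega,
          by simpa [DStep.isDiag] using h2⟩, rfl⟩
      · simp [DStep.isDiag] at h2
      · simp [DStep.isDiag] at h2
  · rintro (⟨t, ⟨h1, h2⟩, rfl⟩ | ⟨t, ⟨h1, h2⟩, rfl⟩) <;>
      rw [DS_sum_cons, h1] <;>
      simp [DStep.disp, DStep.isDiag, Prod.ext_iff, List.countP_cons, h2] <;> omega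

/-- Decomposition for r ≥ 1, m,n ≥ 1. -/
lemma DS_decomp_succ (m n r : ℕ) :
    DS (m+1) (n+1) (r+1) =
      ((List.cons R '' DS m (n+1) (r+1)) ∪ (List.cons U '' DS (m+1) n (r+1))) ∪
      ((List.cons D1 '' DS m n r) ∪ (List.cons D2 '' DS m n r)) := by
  ext l
  simp only [DS, Set.mem_setOf_eq, Set.mem_union, Set.mem_image]
  constructor
  · rintro ⟨h1, h2⟩
    cases l with
    | nil => simp [Prod.ext_iff] at h1
    | cons s t =>
      rw [DS_sum_cons] at h1
      rw [List.countP_cons] at h2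
      cases s
      · left; left; exact ⟨t, ⟨by simp [DStep.disp, Prod.ext_iff] at h1 ⊢; omega,
          by simp [DStep.isDiag] at h2; omega⟩, rfl⟩
      · left; right; exact ⟨t, ⟨by simp [DStep.disp, Prod.ext_iff] at h1 ⊢; omega,
          by simp [DStep.isDiag] at h2; omega⟩, rfl⟩
      · right; left; exact ⟨t, ⟨by simp [DStep.disp, Prod.ext_iff] at h1 ⊢; omega,
          by simp [DStep.isDiag] at h2; omega⟩, rfl⟩
      · right; right; exact ⟨t, ⟨by simp [DStep.disp, Prod.ext_iff] at h1 ⊢; omega,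
          by simp [DStep.isDiag] at h2; omega⟩, rfl⟩
  · rintro ((⟨t, ⟨h1, h2⟩, rfl⟩ | ⟨t, ⟨h1, h2⟩, rfl⟩) | (⟨t, ⟨h1, h2⟩, rfl⟩ | ⟨t, ⟨h1, h2⟩, rfl⟩)) <;>
      rw [DS_sum_cons, h1] <;>
      simp [DStep.disp, DStep.isDiag, Prod.ext_iff, List.countP_cons, h2] <;> omega

lemma ncard_cons_image (s : DStep) (T : Set (List DStep)) :
    (List.cons s '' T).ncard = T.ncard :=
  Set.ncard_image_of_injective T (fun a b h => by injection h)

lemma disj_cons (s₁ s₂ : DStep) (h : s₁ ≠ s₂) (T₁ T₂ : Set (List DStep)) :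
    Disjoint (List.cons s₁ '' T₁) (List.cons s₂ '' T₂) := by
  rw [Set.disjoint_iff_forall_ne]
  rintro a ⟨t, -, rfl⟩ b ⟨u, -, rfl⟩ hab
  injection hab with h1 h2
  exact h h1

lemma rhs_zero (m n r : ℕ) (h : min m n < r) :
    2 ^ r * (m + n - r).choose m * m.choose r = 0 := by
  rcases le_or_gt r m with hm | hm
  · have hn : n < r := by omega
    have : m + n - r < m := by omega
    rw [Nat.choose_eq_zero_of_lt this]
    ring
  · rw [Nat.choose_eq_zero_of_lt hm]; ring

lemma DS_ncard : ∀ N m n r, m + n ≤ N →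
    (DS m n r).ncard = 2 ^ r * (m + n - r).choose m * m.choose r := by
  intro N
  induction N with
  | zero =>
    intro m n r h
    have hm : m = 0 := by omega
    have hn : n = 0 := by omega
    subst hm hn
    rcases Nat.eq_zero_or_pos r with rfl | hr
    · rw [DS_m_zero_set]; simp
    · rw [DS_empty 0 0 r (by omega), rhs_zero 0 0 r (by omega)]
      simp
  | succ N ih =>
    intro m n r h
    rcases lt_or_ge (min m n) r with hlt | hle
    · rw [DS_empty m n r hlt, rhs_zero m n r hlt]
      simp
    · -- r ≤ min m n
      match m, n with
      | 0, n =>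
        have hr : r = 0 := by omega
        subst hr
        rw [DS_m_zero_set]; simp
      | m+1, 0 =>
        have hr : r = 0 := by omega
        subst hr
        rw [DS_n_zero_set]; simp
      | m+1, n+1 =>
        rcases r with _ | r
        · rw [DS_decomp_zero,
            Set.ncard_union_eq (disj_cons R U (by simp) _ _)
              ((DS_finite _ _ _).image _) ((DS_finite _ _ _).image _),
            ncard_cons_image, ncard_cons_image,
            ih m (n+1) 0 (by omega), ih (m+1) n 0 (by omega)]
          simp only [Nat.sub_zero, Nat.choose_zero_right, pow_zero, one_mul, mul_one]
          have h1 : m + 1 + n = m + (n + 1) := by omega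
          have h2 : m + 1 + (n + 1) = (m + (n + 1)) + 1 := by omega
          rw [h1, h2, Nat.choose_succ_succ]
        · rw [DS_decomp_succ,
            Set.ncard_union_eq ?hd
              (((DS_finite _ _ _).image _).union ((DS_finite _ _ _).image _))
              (((DS_finite _ _ _).image _).union ((DS_finite _ _ _).image _)),
            Set.ncard_union_eq (disj_cons R U (by simp) _ _)
              ((DS_finite _ _ _).image _) ((DS_finite _ _ _).image _),
            Set.ncard_union_eq (disj_cons D1 D2 (by simp) _ _)
              ((DS_finite _ _ _).image _) ((DS_finite _ _ _).image _),
            ncard_cons_image, ncard_cons_image, ncard_cons_image, ncard_cons_image,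
            ih m (n+1) (r+1) (by omega), ih (m+1) n (r+1) (by omega),
            ih m n r (by omega)]
          case hd =>
            apply Set.disjoint_union_left.mpr
            constructor <;> apply Set.disjoint_union_right.mpr <;>
              exact ⟨disj_cons _ _ (by simp) _ _, disj_cons _ _ (by simp) _ _⟩
          -- algebra
          have hrm : r + 1 ≤ m + 1 := by omega
          have hrn : r + 1 ≤ n + 1 := by omega
          obtain ⟨L, hL⟩ : ∃ L, m + 1 + (n + 1) - (r + 1) = L + 1 := ⟨m + n - r, by omega⟩
          have e1 : m + (n + 1) - (r + 1) = L := by omega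
          have e2 : m + 1 + n - (r + 1) = L := by omega
          have e3 : m + n - r = L := by omega
          rw [hL, e1, e2, e3, Nat.choose_succ_succ L m, Nat.choose_succ_succ m r]
          ring

/-- The number of diagonally 2-colored Delannoy paths from `(0,0)` to `(m,n)` with exactly
`r` diagonal steps is `2^r · C(m+n-r, m) · C(m, r)`. -/
theorem stmt13 (m n r : ℕ) (hr : r ≤ min m n) :
    {l : List DStep | (l.map DStep.disp).sum = (m, n) ∧ l.countP DStep.isDiag = r}.ncard
      = 2 ^ r * (m + n - r).choose m * m.choose r := by
  exact DS_ncard (m + n) m n r le_rfl
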